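/- Let x ∈ J and let {Iᵢ}_{i∈F} be an x-norming family. For every i ∈ F and every n ∈ Iᵢ with x(n) ≠ 0, the three numbers ∑_{m∈Iᵢ} x(m), ∑_{m∈Iᵢ, m≤n} x(m), and ∑_{m∈Iᵢ, m≥n} x(m) are all nonzero and have the same sign. -/

import Mathlib

open Filter Topology Classical

noncomputable section

/-- Admissible finite families of pairwise disjoint, increasingly ordered intervals
`[f i .1, f i .2]` of `ℕ`. -/
def Admissible (n : ℕ) (f : Fin n → ℕ × ℕ) : Prop :=
  (∀ i, (f i).1 ≤ (f i).2) ∧ ∀ i j : Fin n, i < j → (f i).2 < (f j).1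

/-- The set of estimates appearing in the definition of the James norm. -/
def estimates (x : ℕ → ℝ) : Set ℝ :=
  {r | ∃ n, ∃ f : Fin n → ℕ × ℕ, Admissible n f ∧
    r = Real.sqrt (∑ i, (∑ k ∈ Finset.Icc (f i).1 (f i).2, x k) ^ 2)}

/-- `x` belongs to the James space `J`. -/
def MemJ (x : ℕ → ℝ) : Prop := BddAbove (estimates x)

/-- The James norm. -/
def jamesNorm (x : ℕ → ℝ) : ℝ := sSup (estimates x)

/-- The ℓ² norm. -/
def l2Norm (x : ℕ → ℝ) : ℝ := Real.sqrt (∑' k, (x k) ^ 2)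

/-- The closed unit ball of the James space. -/
def ballJ : Set (ℕ → ℝ) := {x | MemJ x ∧ jamesNorm x ≤ 1}

/-- The support of a sequence. -/
def supp (x : ℕ → ℝ) : Set ℕ := {n | x n ≠ 0}

/-- The (possibly infinite) sum of `x` over a subset `I` of `ℕ`,
as the limit of the partial sums. -/
def setSum (x : ℕ → ℝ) (I : Set ℕ) : ℝ :=
  limUnder atTop (fun N => ∑ k ∈ Finset.range N, if k ∈ I then x k else 0)

/-- An `x`-norming family: a (finite or infinite) family of pairwise disjoint
nonempty intervals of `ℕ`, indexed by an initial segment `F` of `ℕ`, ordered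
increasingly, whose interval sums exist and realize the James norm of `x`. -/
structure NormingFamily (x : ℕ → ℝ) where
  F : Set ℕ
  F_nonempty : F.Nonempty
  initial : ∀ ⦃m n : ℕ⦄, m ≤ n → n ∈ F → m ∈ F
  I : ℕ → Set ℕ
  I_nonempty : ∀ i ∈ F, (I i).Nonempty
  I_interval : ∀ i ∈ F, (I i).OrdConnected
  ordered : ∀ i ∈ F, ∀ j ∈ F, i < j → ∀ a ∈ I i, ∀ b ∈ I j, a < b
  sums_exist : ∀ i ∈ F, ∃ l : ℝ,
    Tendsto (fun N => ∑ k ∈ Finset.range N, if k ∈ I i then x k else 0) atTop (𝓝 l)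
  norming : ∑' i : F, (setSum x (I i)) ^ 2 = (jamesNorm x) ^ 2

/-- An `x`-norming partition: an `x`-norming family whose intervals cover the
support of `x`, every interval has its minimum in the support, every non-final
interval has its maximum in the support, and the final interval does not extend
beyond the supremum of the support. -/
structure NormingPartition (x : ℕ → ℝ) extends NormingFamily x where
  covers : supp x ⊆ ⋃ i ∈ F, I i
  min_in_supp : ∀ i ∈ F, ∃ m ∈ I i ∩ supp x, ∀ k ∈ I i, m ≤ k
  max_in_supp : ∀ i ∈ F, (∃ j ∈ F, i < j) → ∃ m ∈ I i ∩ supp x, ∀ k ∈ I i, k ≤ m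
  bounded_by_supp : ∀ i ∈ F, ∀ k ∈ I i, ∃ m ∈ supp x, k ≤ m

/-- `n₁ < n₂` are consecutive elements of the support of `x`. -/
def Consecutive (x : ℕ → ℝ) (n₁ n₂ : ℕ) : Prop :=
  n₁ ∈ supp x ∧ n₂ ∈ supp x ∧ n₁ < n₂ ∧ ∀ k, n₁ < k → k < n₂ → x k = 0

end

section auxiliary

/-- Partial sums of `x` over a set `K`. -/
private noncomputable def pS (x : ℕ → ℝ) (K : Set ℕ) (N : ℕ) : ℝ :=
  ∑ k ∈ Finset.range N, if k ∈ K then x k else 0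

private lemma zero_mem_estimates (x : ℕ → ℝ) : (0:ℝ) ∈ estimates x := by
  refine ⟨0, Fin.elim0, ⟨fun i => i.elim0, fun i => i.elim0⟩, by simp⟩

private lemma jamesNorm_nonneg {x : ℕ → ℝ} (hx : MemJ x) : 0 ≤ jamesNorm x :=
  le_csSup hx (zero_mem_estimates x)

/-- Any finite family of pairwise disjoint, increasingly ordered, nonempty intervals
with convergent sums gives an estimate bounded by the James norm. -/
private lemma mainLemma {α : Type*} [LinearOrder α] {x : ℕ → ℝ} (hx : MemJ x)
    (G : Finset α) (K : α → Set ℕ) (s : α → ℝ)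
    (hne : ∀ t ∈ G, (K t).Nonempty)
    (hoc : ∀ t ∈ G, (K t).OrdConnected)
    (hord : ∀ t ∈ G, ∀ u ∈ G, t < u → ∀ a ∈ K t, ∀ b ∈ K u, a < b)
    (hs : ∀ t ∈ G, Tendsto (fun N => ∑ k ∈ Finset.range N, if k ∈ K t then x k else 0)
      atTop (𝓝 (s t))) :
    ∑ t ∈ G, (s t)^2 ≤ (jamesNorm x)^2 := by
  classical
  set a : α → ℕ := fun t => sInf (K t) with ha_def
  have haK : ∀ t ∈ G, a t ∈ K t := fun t ht => Nat.sInf_mem (hne t ht)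
  have key : ∀ N, G.sup a + 1 ≤ N →
      ∑ t ∈ G, (∑ k ∈ Finset.range N, if k ∈ K t then x k else 0)^2 ≤ (jamesNorm x)^2 := by
    intro N hN
    have haN : ∀ t ∈ G, a t < N := fun t ht =>
      lt_of_lt_of_le (Nat.lt_succ_of_le (Finset.le_sup ht)) hN
    have hFt : ∀ t ∈ G, a t ∈ (Finset.range N).filter (· ∈ K t) := by
      intro t ht
      simp only [Finset.mem_filter, Finset.mem_range]
      exact ⟨haN t ht, haK t ht⟩
    have hmax : ∀ t ∈ G, ∃ bt : ℕ, a t ≤ bt ∧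
        (∑ k ∈ Finset.range N, if k ∈ K t then x k else 0) = ∑ k ∈ Finset.Icc (a t) bt, x k ∧
        bt ∈ K t := by
      intro t ht
      have hne' : ((Finset.range N).filter (· ∈ K t)).Nonempty := ⟨a t, hFt t ht⟩
      set bt := ((Finset.range N).filter (· ∈ K t)).max' hne' with hbt_def
      have hbtmem := Finset.max'_mem _ hne'
      rw [Finset.mem_filter, Finset.mem_range] at hbtmem
      have hIcc : (Finset.range N).filter (· ∈ K t) = Finset.Icc (a t) bt := by
        ext k
        simp only [Finset.mem_filter, Finset.mem_range, Finset.mem_Icc]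
        constructor
        · rintro ⟨hk1, hk2⟩
          refine ⟨Nat.sInf_le hk2, Finset.le_max' _ k ?_⟩
          simp only [Finset.mem_filter, Finset.mem_range]
          exact ⟨hk1, hk2⟩
        · rintro ⟨hk1, hk2⟩
          refine ⟨lt_of_le_of_lt hk2 hbtmem.1, ?_⟩
          exact (hoc t ht).out (haK t ht) hbtmem.2 ⟨hk1, hk2⟩
      refine ⟨bt, Finset.le_max' _ _ (hFt t ht), ?_, hbtmem.2⟩
      rw [← hIcc, Finset.sum_filter]
    choose bt hab hsumIcc hbtK using hmax
    set m := G.card with hm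
    set e := G.orderIsoOfFin rfl with he
    set f : Fin m → ℕ × ℕ := fun k => (a (e k), bt (e k) (e k).2) with hfdef
    have hadm : Admissible m f := by
      constructor
      · intro k; exact hab _ (e k).2
      · intro k l hkl
        have hlt : ((e k : {y // y ∈ G}) : α) < ((e l : {y // y ∈ G}) : α) :=
          Subtype.coe_lt_coe.2 (e.lt_iff_lt.2 hkl)
        exact hord _ (e k).2 _ (e l).2 hlt _ (hbtK _ (e k).2) _ (haK _ (e l).2)
    have hmem : Real.sqrt (∑ k : Fin m, (∑ j ∈ Finset.Icc (f k).1 (f k).2, x j)^2)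
        ∈ estimates x := ⟨m, f, hadm, rfl⟩
    have hle : Real.sqrt (∑ k : Fin m, (∑ j ∈ Finset.Icc (f k).1 (f k).2, x j)^2)
        ≤ jamesNorm x := le_csSup hx hmem
    have hq0 : (0:ℝ) ≤ ∑ k : Fin m, (∑ j ∈ Finset.Icc (f k).1 (f k).2, x j)^2 :=
      Finset.sum_nonneg fun k _ => sq_nonneg _
    have hreindex : ∑ t ∈ G, (∑ k ∈ Finset.range N, if k ∈ K t then x k else 0)^2
        = ∑ k : Fin m, (∑ j ∈ Finset.Icc (f k).1 (f k).2, x j)^2 := by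
      rw [← Finset.sum_coe_sort G
        (fun t => (∑ k ∈ Finset.range N, if k ∈ K t then x k else 0)^2)]
      rw [← Fintype.sum_equiv e.toEquiv
        (fun k : Fin m => (∑ j ∈ Finset.range N,
          if j ∈ K ((e k : {y // y ∈ G}) : α) then x j else 0)^2)
        (fun t : {y // y ∈ G} => (∑ j ∈ Finset.range N, if j ∈ K (t : α) then x j else 0)^2)
        (fun k => rfl)]
      refine Finset.sum_congr rfl fun k _ => ?_
      rw [hsumIcc _ (e k).2]
    rw [hreindex]
    calc ∑ k : Fin m, (∑ j ∈ Finset.Icc (f k).1 (f k).2, x j)^2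
        = (Real.sqrt (∑ k : Fin m, (∑ j ∈ Finset.Icc (f k).1 (f k).2, x j)^2))^2 :=
          (Real.sq_sqrt hq0).symm
      _ ≤ (jamesNorm x)^2 := pow_le_pow_left₀ (Real.sqrt_nonneg _) hle 2
  have htend : Tendsto
      (fun N => ∑ t ∈ G, (∑ k ∈ Finset.range N, if k ∈ K t then x k else 0)^2)
      atTop (𝓝 (∑ t ∈ G, (s t)^2)) :=
    tendsto_finset_sum _ fun t ht => (hs t ht).pow 2
  exact le_of_tendsto htend (eventually_atTop.2 ⟨G.sup a + 1, key⟩)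

private lemma tendsto_setSumI {x : ℕ → ℝ} (P : NormingFamily x) {j : ℕ} (hj : j ∈ P.F) :
    Tendsto (fun N => ∑ k ∈ Finset.range N, if k ∈ P.I j then x k else 0) atTop
      (𝓝 (setSum x (P.I j))) := by
  obtain ⟨l, hl⟩ := P.sums_exist j hj
  have : setSum x (P.I j) = l := hl.limUnder_eq
  rwa [this]

/-- Sums over ordered nonempty subintervals of `P.I i` are bounded by `(setSum x (P.I i))²`. -/
private lemma stepB {x : ℕ → ℝ} (hx : MemJ x) (P : NormingFamily x) {i : ℕ} (hi : i ∈ P.F)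
    {r : ℕ} (Q : Fin r → Set ℕ) (t : Fin r → ℝ)
    (hQI : ∀ k, Q k ⊆ P.I i)
    (hQne : ∀ k, (Q k).Nonempty)
    (hQoc : ∀ k, (Q k).OrdConnected)
    (hQord : ∀ k l : Fin r, k < l → ∀ a ∈ Q k, ∀ b ∈ Q l, a < b)
    (ht : ∀ k, Tendsto (fun N => ∑ m ∈ Finset.range N, if m ∈ Q k then x m else 0)
      atTop (𝓝 (t k))) :
    ∑ k, (t k)^2 ≤ (setSum x (P.I i))^2 := by
  classical
  set f : {y // y ∈ P.F} → ℝ := fun j => (setSum x (P.I (j:ℕ)))^2 with hf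
  have hf0 : ∀ j, 0 ≤ f j := fun j => sq_nonneg _
  have hfin : ∀ u : Finset {y // y ∈ P.F}, ∑ j ∈ u, f j ≤ (jamesNorm x)^2 := by
    intro u
    have h := mainLemma (α := ℕ) hx (u.image Subtype.val) P.I
      (fun j => setSum x (P.I j)) ?_ ?_ ?_ ?_
    · rw [Finset.sum_image (by intro p _ q _ h; exact Subtype.ext h)] at h
      simpa only [hf] using h
    · intro j hj
      obtain ⟨j', _, rfl⟩ := Finset.mem_image.1 hj
      exact P.I_nonempty _ j'.2
    · intro j hj
      obtain ⟨j', _, rfl⟩ := Finset.mem_image.1 hj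
      exact P.I_interval _ j'.2
    · intro j hj j2 hj2 hlt
      obtain ⟨j', _, rfl⟩ := Finset.mem_image.1 hj
      obtain ⟨j2', _, rfl⟩ := Finset.mem_image.1 hj2
      exact P.ordered _ j'.2 _ j2'.2 hlt
    · intro j hj
      obtain ⟨j', _, rfl⟩ := Finset.mem_image.1 hj
      exact tendsto_setSumI P j'.2
  have hSummable : Summable f := summable_of_sum_le hf0 hfin
  set j₀ : {y // y ∈ P.F} := ⟨i, hi⟩ with hj₀
  set g : {y // y ∈ P.F} → ℝ := fun j => if j = j₀ then 0 else f j with hg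
  have hg0 : ∀ j, 0 ≤ g j := by
    intro j; by_cases h : j = j₀
    · simp [hg, h]
    · simpa [hg, h] using hf0 j
  have hgle : ∀ j, g j ≤ f j := by
    intro j; by_cases h : j = j₀
    · simpa [hg, h] using hf0 j₀
    · simp [hg, h]
  have hgSummable : Summable g := hSummable.of_nonneg_of_le hg0 hgle
  have hkey : ∀ u : Finset {y // y ∈ P.F},
      ∑ j ∈ u, g j + ∑ k, (t k)^2 ≤ (jamesNorm x)^2 := by
    intro u
    have hgu : ∑ j ∈ u, g j = ∑ j ∈ u.erase j₀, f j := by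
      rw [← Finset.sum_erase u (by simp [hg] : g j₀ = 0)]
      exact Finset.sum_congr rfl fun j hj => by simp [hg, Finset.ne_of_mem_erase hj]
    rw [hgu]
    set K : ℕ ×ₗ ℕ → Set ℕ := fun p => if (ofLex p).2 = 0 then P.I (ofLex p).1
      else if h : (ofLex p).2 - 1 < r then Q ⟨(ofLex p).2 - 1, h⟩ else Set.univ with hK
    set s : ℕ ×ₗ ℕ → ℝ := fun p => if (ofLex p).2 = 0 then setSum x (P.I (ofLex p).1)
      else if h : (ofLex p).2 - 1 < r then t ⟨(ofLex p).2 - 1, h⟩ else 0 with hs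
    have hK1 : ∀ j : ℕ, K (toLex (j, 0)) = P.I j := fun j => by simp [hK]
    have hs1 : ∀ j : ℕ, s (toLex (j, 0)) = setSum x (P.I j) := fun j => by simp [hs]
    have hK2 : ∀ k : Fin r, K (toLex (i, (k:ℕ)+1)) = Q k := by
      intro k
      simp only [hK, ofLex_toLex, Nat.succ_ne_zero, if_false, Nat.add_sub_cancel]
      rw [dif_pos k.isLt]
    have hs2 : ∀ k : Fin r, s (toLex (i, (k:ℕ)+1)) = t k := by
      intro k
      simp only [hs, ofLex_toLex, Nat.succ_ne_zero, if_false, Nat.add_sub_cancel]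
      rw [dif_pos k.isLt]
    set G₁ : Finset (ℕ ×ₗ ℕ) := (u.erase j₀).image (fun j => toLex (j.1, 0)) with hG₁
    set G₂ : Finset (ℕ ×ₗ ℕ) :=
      Finset.univ.image (fun k : Fin r => toLex (i, (k:ℕ)+1)) with hG₂
    have hmemG : ∀ p ∈ G₁ ∪ G₂,
        (∃ j, j ∈ u.erase j₀ ∧ p = toLex (j.1, 0)) ∨
        (∃ k : Fin r, p = toLex (i, (k:ℕ)+1)) := by
      intro p hp
      rcases Finset.mem_union.1 hp with hp | hp
      · obtain ⟨j, hj, rfl⟩ := Finset.mem_image.1 hp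
        exact Or.inl ⟨j, hj, rfl⟩
      · obtain ⟨k, _, rfl⟩ := Finset.mem_image.1 hp
        exact Or.inr ⟨k, rfl⟩
    have hdisj : Disjoint G₁ G₂ := by
      rw [Finset.disjoint_left]
      intro p hp1 hp2
      obtain ⟨j, hj, rfl⟩ := Finset.mem_image.1 hp1
      obtain ⟨k, _, heq⟩ := Finset.mem_image.1 hp2
      have := toLex.injective heq
      simp at this
    have hbound := mainLemma (α := ℕ ×ₗ ℕ) hx (G₁ ∪ G₂) K s ?_ ?_ ?_ ?_
    · rw [Finset.sum_union hdisj] at hbound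
      have e1 : ∑ p ∈ G₁, (s p)^2 = ∑ j ∈ u.erase j₀, f j := by
        rw [hG₁, Finset.sum_image ?_]
        · refine Finset.sum_congr rfl fun j _ => ?_
          simp only [hs1, hf]
        · intro p _ q _ h
          have := toLex.injective h
          exact Subtype.ext (by simpa using this)
      have e2 : ∑ p ∈ G₂, (s p)^2 = ∑ k, (t k)^2 := by
        rw [hG₂, Finset.sum_image ?_]
        · refine Finset.sum_congr rfl fun k _ => ?_
          simp only [hs2]
        · intro p _ q _ h
          have := toLex.injective h
          exact Fin.ext (by simpa using this)
      rw [e1, e2] at hbound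
      exact hbound
    · intro p hp
      rcases hmemG p hp with ⟨j, _, rfl⟩ | ⟨k, rfl⟩
      · rw [hK1]; exact P.I_nonempty _ j.2
      · rw [hK2]; exact hQne k
    · intro p hp
      rcases hmemG p hp with ⟨j, _, rfl⟩ | ⟨k, rfl⟩
      · rw [hK1]; exact P.I_interval _ j.2
      · rw [hK2]; exact hQoc k
    · intro p hp q hq hpq a ha b hb
      rcases hmemG p hp with ⟨j, hju, rfl⟩ | ⟨k, rfl⟩ <;>
        rcases hmemG q hq with ⟨j2, hj2u, rfl⟩ | ⟨k2, rfl⟩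
      · rw [hK1] at ha hb
        rcases Prod.Lex.lt_iff.1 hpq with h | ⟨_, h⟩
        · exact P.ordered _ j.2 _ j2.2 h a ha b hb
        · exact absurd h (lt_irrefl 0)
      · rw [hK1] at ha; rw [hK2] at hb
        rcases Prod.Lex.lt_iff.1 hpq with h | ⟨h, _⟩
        · exact P.ordered _ j.2 _ hi h a ha b (hQI k2 hb)
        · exfalso
          exact (Finset.ne_of_mem_erase hju) (Subtype.ext h)
      · rw [hK2] at ha; rw [hK1] at hb
        rcases Prod.Lex.lt_iff.1 hpq with h | ⟨_, h⟩
        · exact P.ordered _ hi _ j2.2 h a (hQI k ha) b hb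
        · exact absurd h (by simp only [ofLex_toLex] at *; omega)
      · rw [hK2] at ha hb
        rcases Prod.Lex.lt_iff.1 hpq with h | ⟨_, h⟩
        · exact absurd h (lt_irrefl i)
        · exact hQord k k2 (by simp only [ofLex_toLex] at *; omega) a ha b hb
    · intro p hp
      rcases hmemG p hp with ⟨j, _, rfl⟩ | ⟨k, rfl⟩
      · rw [hK1, hs1]; exact tendsto_setSumI P j.2
      · rw [hK2, hs2]; exact ht k
  have h1 : ∑' j, g j ≤ (jamesNorm x)^2 - ∑ k, (t k)^2 :=
    Summable.tsum_le_of_sum_le hgSummable fun u => by linarith [hkey u]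
  have h2 : ∑' j, f j = f j₀ + ∑' j, g j := by
    rw [hg]; exact Summable.tsum_eq_add_tsum_ite hSummable j₀
  have h3 : ∑' j, f j = (jamesNorm x)^2 := P.norming
  have h4 : f j₀ = (setSum x (P.I i))^2 := rfl
  linarith [h1, h2.symm.trans h3, h4]

private lemma stepB2 {x : ℕ → ℝ} (hx : MemJ x) (P : NormingFamily x) {i : ℕ} (hi : i ∈ P.F)
    (Q₁ Q₂ : Set ℕ) (t₁ t₂ : ℝ)
    (h₁I : Q₁ ⊆ P.I i) (h₂I : Q₂ ⊆ P.I i)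
    (h₁ne : Q₁.Nonempty) (h₂ne : Q₂.Nonempty)
    (h₁oc : Q₁.OrdConnected) (h₂oc : Q₂.OrdConnected)
    (hord : ∀ a ∈ Q₁, ∀ b ∈ Q₂, a < b)
    (ht₁ : Tendsto (fun N => ∑ m ∈ Finset.range N, if m ∈ Q₁ then x m else 0) atTop (𝓝 t₁))
    (ht₂ : Tendsto (fun N => ∑ m ∈ Finset.range N, if m ∈ Q₂ then x m else 0) atTop (𝓝 t₂)) :
    t₁^2 + t₂^2 ≤ (setSum x (P.I i))^2 := by
  have h := stepB hx P hi ![Q₁, Q₂] ![t₁, t₂] ?_ ?_ ?_ ?_ ?_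
  · simpa [Fin.sum_univ_two] using h
  · intro k; fin_cases k <;> simpa
  · intro k; fin_cases k <;> simpa
  · intro k; fin_cases k <;> simpa
  · intro k l hkl a ha b hb
    fin_cases k <;> fin_cases l
    · exact absurd hkl (by decide)
    · exact hord a (by simpa using ha) b (by simpa using hb)
    · exact absurd hkl (by decide)
    · exact absurd hkl (by decide)
  · intro k; fin_cases k <;> simpa

private lemma stepB1 {x : ℕ → ℝ} (hx : MemJ x) (P : NormingFamily x) {i : ℕ} (hi : i ∈ P.F)
    (Q₁ : Set ℕ) (t₁ : ℝ)
    (h₁I : Q₁ ⊆ P.I i) (h₁ne : Q₁.Nonempty) (h₁oc : Q₁.OrdConnected)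
    (ht₁ : Tendsto (fun N => ∑ m ∈ Finset.range N, if m ∈ Q₁ then x m else 0) atTop (𝓝 t₁)) :
    t₁^2 ≤ (setSum x (P.I i))^2 := by
  have h := stepB hx P hi ![Q₁] ![t₁] ?_ ?_ ?_ ?_ ?_
  · simpa [Fin.sum_univ_one] using h
  · intro k; fin_cases k <;> simpa
  · intro k; fin_cases k <;> simpa
  · intro k; fin_cases k <;> simpa
  · intro k l hkl a ha b hb
    fin_cases k <;> fin_cases l
    exact absurd hkl (by decide)
  · intro k; fin_cases k <;> simpa

private lemma tendsto_pS_of_bdd (x : ℕ → ℝ) (K : Set ℕ) (M : ℕ) (hK : ∀ k ∈ K, k < M) :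
    Tendsto (pS x K) atTop (𝓝 (pS x K M)) := by
  simp only [pS]
  refine Tendsto.congr' ?_ tendsto_const_nhds
  filter_upwards [eventually_ge_atTop M] with N hN
  exact Finset.sum_subset (Finset.range_subset_range.2 hN)
    (fun k _ hk' => if_neg fun hkK => hk' (Finset.mem_range.2 (hK k hkK)))

end auxiliary

set_option maxHeartbeats 1000000 in
theorem stmt8 (x : ℕ → ℝ) (hx : MemJ x) (P : NormingFamily x)
    (i : ℕ) (hi : i ∈ P.F) (n : ℕ) (hn : n ∈ P.I i) (hxn : x n ≠ 0) :
    setSum x (P.I i) ≠ 0 ∧ setSum x (P.I i ∩ Set.Iic n) ≠ 0 ∧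
      setSum x (P.I i ∩ Set.Ici n) ≠ 0 ∧
      0 < setSum x (P.I i) * setSum x (P.I i ∩ Set.Iic n) ∧
      0 < setSum x (P.I i) * setSum x (P.I i ∩ Set.Ici n) := by
  classical
  have hS : Tendsto (pS x (P.I i)) atTop (𝓝 (setSum x (P.I i))) := tendsto_setSumI P hi
  set S := setSum x (P.I i) with hSdef
  have hA : Tendsto (pS x (P.I i ∩ Set.Iic n)) atTop (𝓝 (pS x (P.I i ∩ Set.Iic n) (n+1))) :=
    tendsto_pS_of_bdd x (P.I i ∩ Set.Iic n) (n+1)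
      (fun k hk => Nat.lt_succ_of_le (Set.mem_Iic.1 hk.2))
  have hA'' : Tendsto (pS x (P.I i ∩ Set.Iio n)) atTop (𝓝 (pS x (P.I i ∩ Set.Iio n) n)) :=
    tendsto_pS_of_bdd x (P.I i ∩ Set.Iio n) n (fun k hk => Set.mem_Iio.1 hk.2)
  set A : ℝ := pS x (P.I i ∩ Set.Iic n) (n+1) with hAdef
  set A' : ℝ := pS x (P.I i ∩ Set.Iio n) n with hA'def
  have hsplit1 : ∀ N, pS x (P.I i) N
      = pS x (P.I i ∩ Set.Iic n) N + pS x (P.I i ∩ Set.Ioi n) N := by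
    intro N
    simp only [pS]
    rw [← Finset.sum_add_distrib]
    refine Finset.sum_congr rfl fun k _ => ?_
    by_cases h1 : k ∈ P.I i
    · rcases le_or_gt k n with h2 | h2
      · simp [Set.mem_inter_iff, Set.mem_Iic, Set.mem_Ioi, h1, h2, not_lt.2 h2]
      · simp [Set.mem_inter_iff, Set.mem_Iic, Set.mem_Ioi, h1, h2, not_le.2 h2]
    · simp [Set.mem_inter_iff, h1]
  have hsplit2 : ∀ N, pS x (P.I i) N
      = pS x (P.I i ∩ Set.Iio n) N + pS x (P.I i ∩ Set.Ici n) N := by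
    intro N
    simp only [pS]
    rw [← Finset.sum_add_distrib]
    refine Finset.sum_congr rfl fun k _ => ?_
    by_cases h1 : k ∈ P.I i
    · rcases lt_or_ge k n with h2 | h2
      · simp [Set.mem_inter_iff, Set.mem_Iio, Set.mem_Ici, h1, h2, not_le.2 h2]
      · simp [Set.mem_inter_iff, Set.mem_Iio, Set.mem_Ici, h1, h2, not_lt.2 h2]
    · simp [Set.mem_inter_iff, h1]
  have hB : Tendsto (pS x (P.I i ∩ Set.Ici n)) atTop (𝓝 (S - A')) := by
    refine (hS.sub hA'').congr fun N => ?_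
    have := hsplit2 N
    linarith
  have hB' : Tendsto (pS x (P.I i ∩ Set.Ioi n)) atTop (𝓝 (S - A)) := by
    refine (hS.sub hA).congr fun N => ?_
    have := hsplit1 N
    linarith
  have sA : setSum x (P.I i ∩ Set.Iic n) = A := hA.limUnder_eq
  have sB : setSum x (P.I i ∩ Set.Ici n) = S - A' := hB.limUnder_eq
  have hAA' : A = A' + x n := by
    rw [hAdef, hA'def]
    simp only [pS]
    rw [Finset.sum_range_succ]
    congr 1
    · refine Finset.sum_congr rfl fun k hk => ?_
      have hkn : k < n := Finset.mem_range.1 hk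
      by_cases h1 : k ∈ P.I i
      · simp [Set.mem_inter_iff, Set.mem_Iic, Set.mem_Iio, h1, hkn, hkn.le]
      · simp [Set.mem_inter_iff, h1]
    · rw [if_pos]
      exact ⟨hn, Set.mem_Iic.2 le_rfl⟩
  have hIicne : (P.I i ∩ Set.Iic n).Nonempty := ⟨n, hn, Set.mem_Iic.2 le_rfl⟩
  have hIcine : (P.I i ∩ Set.Ici n).Nonempty := ⟨n, hn, Set.mem_Ici.2 le_rfl⟩
  have hocIic : (P.I i ∩ Set.Iic n).OrdConnected :=
    (P.I_interval i hi).inter Set.ordConnected_Iic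
  have hocIci : (P.I i ∩ Set.Ici n).OrdConnected :=
    (P.I_interval i hi).inter Set.ordConnected_Ici
  have hocIio : (P.I i ∩ Set.Iio n).OrdConnected :=
    (P.I_interval i hi).inter Set.ordConnected_Iio
  have hocIoi : (P.I i ∩ Set.Ioi n).OrdConnected :=
    (P.I_interval i hi).inter Set.ordConnected_Ioi
  have hzeroIoi : ¬ (P.I i ∩ Set.Ioi n).Nonempty → S - A = 0 := by
    intro hne2
    have hempty : P.I i ∩ Set.Ioi n = ∅ := Set.not_nonempty_iff_eq_empty.1 hne2
    refine tendsto_nhds_unique hB' (Tendsto.congr (fun N => ?_) tendsto_const_nhds)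
    simp only [pS]
    exact (Finset.sum_eq_zero fun k _ => if_neg fun hk => by
      rw [hempty] at hk; exact Set.notMem_empty k hk).symm
  have hzeroIio : ¬ (P.I i ∩ Set.Iio n).Nonempty → A' = 0 := by
    intro hne2
    have hempty : P.I i ∩ Set.Iio n = ∅ := Set.not_nonempty_iff_eq_empty.1 hne2
    refine tendsto_nhds_unique hA'' (Tendsto.congr (fun N => ?_) tendsto_const_nhds)
    simp only [pS]
    exact (Finset.sum_eq_zero fun k _ => if_neg fun hk => by
      rw [hempty] at hk; exact Set.notMem_empty k hk).symm
  have ineq1 : A^2 + (S - A)^2 ≤ S^2 := by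
    by_cases hne2 : (P.I i ∩ Set.Ioi n).Nonempty
    · exact stepB2 hx P hi (P.I i ∩ Set.Iic n) (P.I i ∩ Set.Ioi n) A (S - A)
        Set.inter_subset_left Set.inter_subset_left hIicne hne2 hocIic hocIoi
        (fun a ha b hb => lt_of_le_of_lt (Set.mem_Iic.1 ha.2) (Set.mem_Ioi.1 hb.2))
        hA hB'
    · have h0 := hzeroIoi hne2
      have hAS : A = S := by linarith
      rw [hAS]
      nlinarith [sq_nonneg S]
  have ineq2 : A'^2 + (S - A')^2 ≤ S^2 := by
    by_cases hne2 : (P.I i ∩ Set.Iio n).Nonempty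
    · exact stepB2 hx P hi (P.I i ∩ Set.Iio n) (P.I i ∩ Set.Ici n) A' (S - A')
        Set.inter_subset_left Set.inter_subset_left hne2 hIcine hocIio hocIci
        (fun a ha b hb => lt_of_lt_of_le (Set.mem_Iio.1 ha.2) (Set.mem_Ici.1 hb.2))
        hA'' hB
    · have h0 := hzeroIio hne2
      rw [h0]
      nlinarith [sq_nonneg S]
  have ineq3 : A'^2 + (S - A)^2 ≤ S^2 := by
    by_cases hne2 : (P.I i ∩ Set.Iio n).Nonempty
    · by_cases hne3 : (P.I i ∩ Set.Ioi n).Nonempty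
      · exact stepB2 hx P hi (P.I i ∩ Set.Iio n) (P.I i ∩ Set.Ioi n) A' (S - A)
          Set.inter_subset_left Set.inter_subset_left hne2 hne3 hocIio hocIoi
          (fun a ha b hb => lt_trans (Set.mem_Iio.1 ha.2) (Set.mem_Ioi.1 hb.2))
          hA'' hB'
      · have h0 := hzeroIoi hne3
        rw [h0]
        have h := stepB1 hx P hi (P.I i ∩ Set.Iio n) A' Set.inter_subset_left hne2 hocIio hA''
        nlinarith [h]
    · have h0 := hzeroIio hne2
      rw [h0]
      by_cases hne3 : (P.I i ∩ Set.Ioi n).Nonempty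
      · have h := stepB1 hx P hi (P.I i ∩ Set.Ioi n) (S - A) Set.inter_subset_left hne3 hocIoi hB'
        nlinarith [h]
      · have h1 := hzeroIoi hne3
        rw [h1]
        nlinarith [sq_nonneg S]
  have hxnsq : 0 < (x n)^2 := by positivity
  have h1 : 0 < S * A := by
    by_contra hcon
    push_neg at hcon
    have hA2 : A^2 ≤ 0 := by nlinarith [ineq1]
    have hA0 : A = 0 := by
      have h : A^2 = 0 := le_antisymm hA2 (sq_nonneg A)
      exact (pow_eq_zero_iff two_ne_zero).1 h
    have hA'v : A' = -(x n) := by rw [hA0] at hAA'; linarith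
    rw [hA'v, hA0] at ineq3
    nlinarith [ineq3, hxnsq]
  have h2 : 0 < S * (S - A') := by
    by_contra hcon
    push_neg at hcon
    have hB2 : (S - A')^2 ≤ 0 := by nlinarith [ineq2]
    have hB0 : S - A' = 0 := by
      have h : (S - A')^2 = 0 := le_antisymm hB2 (sq_nonneg _)
      exact (pow_eq_zero_iff two_ne_zero).1 h
    have hA'S : A' = S := by linarith
    have hSA : S - A = -(x n) := by rw [hAA']; linarith
    rw [hA'S, hSA] at ineq3
    nlinarith [ineq3, hxnsq]
  have hSne : S ≠ 0 := fun h => by rw [h, zero_mul] at h1; exact lt_irrefl 0 h1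
  have hAne : A ≠ 0 := fun h => by rw [h, mul_zero] at h1; exact lt_irrefl 0 h1
  have hBne : S - A' ≠ 0 := fun h => by rw [h, mul_zero] at h2; exact lt_irrefl 0 h2
  exact ⟨hSne, by rw [sA]; exact hAne, by rw [sB]; exact hBne,
    by rw [sA]; exact h1, by rw [sB]; exact h2⟩
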